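/- Let G, F be graphs with all loops, A(G), B(F) partial positive definite matrices each admitting unique maximum-determinant positive definite completions Â and B̂, and let t ∈ (0,1). Then Â #_t B̂ is the unique maximizer of det(M #_t N) over M ∈ p⁺[A(G)], N ∈ p⁺[B(F)], i.e., det(M #_t N) ≤ det(Â #_t B̂) with equality iff M = Â and N = B̂. -/

import Mathlib

open Matrix
open scoped ComplexOrder

/-- Real power of a Hermitian matrix via its spectral decomposition
(junk value for non-Hermitian input). -/
noncomputable def mrpow {m : ℕ} (A : Matrix (Fin m) (Fin m) ℂ) (t : ℝ) : Matrix (Fin m) (Fin m) ℂ :=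
  if h : A.IsHermitian then
    (h.eigenvectorUnitary : Matrix (Fin m) (Fin m) ℂ) *
      Matrix.diagonal (fun i => ((h.eigenvalues i ^ t : ℝ) : ℂ)) *
      star (h.eigenvectorUnitary : Matrix (Fin m) (Fin m) ℂ)
  else A

/-- Weighted geometric mean  A #_t B = A^{1/2} (A^{-1/2} B A^{-1/2})^t A^{1/2}. -/
noncomputable def geomMean {m : ℕ} (t : ℝ) (A B : Matrix (Fin m) (Fin m) ℂ) :
    Matrix (Fin m) (Fin m) ℂ :=
  mrpow A (1/2) * mrpow (mrpow A (-(1/2)) * B * mrpow A (-(1/2))) t * mrpow A (1/2)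

/-- `M` is a completion of a partial matrix `A` with entries specified on edges `E`. -/
def IsCompletion {n : ℕ} (E : Fin n → Fin n → Prop) (A M : Matrix (Fin n) (Fin n) ℂ) : Prop :=
  ∀ i j, E i j → M i j = A i j

/-- The set of positive definite completions of the partial matrix `A`. -/
def pdCompletions {n : ℕ} (E : Fin n → Fin n → Prop) (A : Matrix (Fin n) (Fin n) ℂ) :
    Set (Matrix (Fin n) (Fin n) ℂ) :=
  {M | M.PosDef ∧ IsCompletion E A M}

/-- A partial matrix is partial positive definite if every fully specified
principal submatrix (indexed by a clique) is positive definite. -/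
def PartialPD {n : ℕ} (E : Fin n → Fin n → Prop) (A : Matrix (Fin n) (Fin n) ℂ) : Prop :=
  ∀ C : Finset (Fin n), (∀ i ∈ C, ∀ j ∈ C, E i j) →
    Matrix.PosDef (A.submatrix (fun x : {i // i ∈ C} => (x : Fin n))
      (fun x : {i // i ∈ C} => (x : Fin n)))


lemma mrpow_isHermitian {m : ℕ} {A : Matrix (Fin m) (Fin m) ℂ} (hA : A.IsHermitian) (s : ℝ) :
    (mrpow A s).IsHermitian := by
  rw [mrpow, dif_pos hA]
  have : (Matrix.diagonal (fun i => ((hA.eigenvalues i ^ s : ℝ) : ℂ))).IsHermitian := by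
    have hst : star (fun i => ((hA.eigenvalues i ^ s : ℝ) : ℂ))
        = fun i => ((hA.eigenvalues i ^ s : ℝ) : ℂ) := by
      funext i
      simp [Pi.star_apply]
    rw [Matrix.IsHermitian, diagonal_conjTranspose, hst]
  simpa [Matrix.mul_assoc, Matrix.star_eq_conjTranspose] using
    (Matrix.isHermitian_mul_mul_conjTranspose
      (hA.eigenvectorUnitary : Matrix (Fin m) (Fin m) ℂ) this)

lemma mrpow_det {m : ℕ} {A : Matrix (Fin m) (Fin m) ℂ} (hA : A.PosSemidef) (s : ℝ) :
    (mrpow A s).det = ((A.det.re ^ s : ℝ) : ℂ) := by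
  have h := hA.isHermitian
  rw [mrpow, dif_pos h, det_mul, det_mul]
  have hu : ((h.eigenvectorUnitary : Matrix (Fin m) (Fin m) ℂ)).det *
      (star (h.eigenvectorUnitary : Matrix (Fin m) (Fin m) ℂ)).det = 1 := by
    rw [← det_mul, (Matrix.mem_unitaryGroup_iff).mp (h.eigenvectorUnitary).2, det_one]
  have hre : A.det.re = ∏ i, h.eigenvalues i := by
    rw [h.det_eq_prod_eigenvalues]
    norm_cast
  calc (h.eigenvectorUnitary : Matrix (Fin m) (Fin m) ℂ).det *
        (Matrix.diagonal (fun i => ((h.eigenvalues i ^ s : ℝ) : ℂ))).det *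
        (star (h.eigenvectorUnitary : Matrix (Fin m) (Fin m) ℂ)).det
      = (Matrix.diagonal (fun i => ((h.eigenvalues i ^ s : ℝ) : ℂ))).det := by
        rw [mul_comm ((h.eigenvectorUnitary : Matrix (Fin m) (Fin m) ℂ).det), mul_assoc, hu,
          mul_one]
    _ = ((A.det.re ^ s : ℝ) : ℂ) := by
        rw [det_diagonal, ← Complex.ofReal_prod, hre,
          Real.finset_prod_rpow _ _ (fun i _ => hA.eigenvalues_nonneg i) s]

lemma rpow_sandwich {x y t : ℝ} (hx : 0 < x) (hy : 0 < y) :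
    x ^ (1/2 : ℝ) * (x ^ (-(1/2) : ℝ) * y * x ^ (-(1/2) : ℝ)) ^ t * x ^ (1/2 : ℝ)
      = x ^ (1 - t) * y ^ t := by
  have h1 : (x ^ (-(1/2) : ℝ)) ^ t = x ^ ((-(1/2)) * t) := (Real.rpow_mul hx.le _ _).symm
  rw [Real.mul_rpow (by positivity) (by positivity),
    Real.mul_rpow (by positivity) (by positivity), h1]
  have h2 : x ^ (1/2:ℝ) * (x ^ (-(1/2) * t) * y ^ t * x ^ (-(1/2) * t)) * x ^ (1/2:ℝ)
      = x ^ (1/2:ℝ) * x ^ (-(1/2) * t) * (x ^ (-(1/2) * t) * x ^ (1/2:ℝ)) * y ^ t := by ring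
  rw [h2, ← Real.rpow_add hx, ← Real.rpow_add hx, ← Real.rpow_add hx]
  congr 1
  ring

lemma det_ofReal_of_posDef {m : ℕ} {A : Matrix (Fin m) (Fin m) ℂ} (hA : A.PosDef) :
    A.det = ((A.det.re : ℝ) : ℂ) := by
  have h := hA.det_pos
  rw [Complex.lt_def] at h
  exact Complex.ext rfl (by simpa using h.2.symm)

lemma det_re_pos_of_posDef {m : ℕ} {A : Matrix (Fin m) (Fin m) ℂ} (hA : A.PosDef) :
    0 < A.det.re := by
  have h := hA.det_pos
  rw [Complex.lt_def] at h
  simpa using h.1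

lemma det_geomMean {m : ℕ} {A B : Matrix (Fin m) (Fin m) ℂ} (hA : A.PosDef) (hB : B.PosDef)
    (t : ℝ) :
    (geomMean t A B).det = ((A.det.re ^ (1 - t) * B.det.re ^ t : ℝ) : ℂ) := by
  set X := mrpow A (-(1/2)) with hX
  have hXh : X.IsHermitian := mrpow_isHermitian hA.1 _
  have hC : (X * B * X).PosSemidef := by
    have := hB.posSemidef.conjTranspose_mul_mul_same X
    rwa [hXh.eq] at this
  have hXdet : X.det = ((A.det.re ^ (-(1/2) : ℝ) : ℝ) : ℂ) := mrpow_det hA.posSemidef _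
  have hBdet : B.det = ((B.det.re : ℝ) : ℂ) := det_ofReal_of_posDef hB
  have hCdet : (X * B * X).det.re
      = A.det.re ^ (-(1/2) : ℝ) * B.det.re * A.det.re ^ (-(1/2) : ℝ) := by
    rw [det_mul, det_mul, hXdet, hBdet]
    norm_cast
  have hdA : 0 < A.det.re := det_re_pos_of_posDef hA
  have hdB : 0 < B.det.re := det_re_pos_of_posDef hB
  rw [geomMean, det_mul, det_mul, mrpow_det hA.posSemidef, mrpow_det hC, hCdet]
  rw [← Complex.ofReal_mul, ← Complex.ofReal_mul]
  congr 1
  exact rpow_sandwich hdA hdB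

theorem maxdet_geomMean_completion {n : ℕ}
    (E F : Fin n → Fin n → Prop)
    (hErefl : ∀ i, E i i) (hEsymm : ∀ i j, E i j → E j i)
    (hFrefl : ∀ i, F i i) (hFsymm : ∀ i j, F i j → F j i)
    (A B : Matrix (Fin n) (Fin n) ℂ) (hA : PartialPD E A) (hB : PartialPD F B)
    (Ahat Bhat : Matrix (Fin n) (Fin n) ℂ)
    (hAhat : Ahat ∈ pdCompletions E A)
    (hAmax : ∀ M ∈ pdCompletions E A, M.det.re ≤ Ahat.det.re)
    (hAuniq : ∀ M ∈ pdCompletions E A, M.det.re = Ahat.det.re → M = Ahat)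
    (hBhat : Bhat ∈ pdCompletions F B)
    (hBmax : ∀ N ∈ pdCompletions F B, N.det.re ≤ Bhat.det.re)
    (hBuniq : ∀ N ∈ pdCompletions F B, N.det.re = Bhat.det.re → N = Bhat)
    (t : ℝ) (ht : t ∈ Set.Ioo (0:ℝ) 1) :
    ∀ M ∈ pdCompletions E A, ∀ N ∈ pdCompletions F B,
      (geomMean t M N).det.re ≤ (geomMean t Ahat Bhat).det.re ∧
      ((geomMean t M N).det.re = (geomMean t Ahat Bhat).det.re ↔ M = Ahat ∧ N = Bhat) := by
  intro M hM N hN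
  obtain ⟨htpos, htlt⟩ := ht
  have hMpd := hM.1
  have hNpd := hN.1
  have hApd := hAhat.1
  have hBpd := hBhat.1
  set x := M.det.re
  set y := N.det.re
  set X := Ahat.det.re
  set Y := Bhat.det.re
  have hx : 0 < x := det_re_pos_of_posDef hMpd
  have hy : 0 < y := det_re_pos_of_posDef hNpd
  have hXp : 0 < X := det_re_pos_of_posDef hApd
  have hYp : 0 < Y := det_re_pos_of_posDef hBpd
  have hxX : x ≤ X := hAmax M hM
  have hyY : y ≤ Y := hBmax N hN
  have hgMN : (geomMean t M N).det.re = x ^ (1 - t) * y ^ t := by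
    rw [det_geomMean hMpd hNpd]; exact Complex.ofReal_re _
  have hgAB : (geomMean t Ahat Bhat).det.re = X ^ (1 - t) * Y ^ t := by
    rw [det_geomMean hApd hBpd]; exact Complex.ofReal_re _
  have h1t : (0:ℝ) < 1 - t := by linarith
  constructor
  · rw [hgMN, hgAB]
    exact mul_le_mul (Real.rpow_le_rpow hx.le hxX h1t.le)
      (Real.rpow_le_rpow hy.le hyY htpos.le)
      (Real.rpow_pos_of_pos hy t).le (Real.rpow_pos_of_pos hXp (1 - t)).le
  · constructor
    · intro heq
      rw [hgMN, hgAB] at heq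
      have hxeq : x = X := by
        by_contra hne
        have hlt : x < X := lt_of_le_of_ne hxX hne
        have h1 : x ^ (1 - t) < X ^ (1 - t) := Real.rpow_lt_rpow hx.le hlt h1t
        have h2 : y ^ t ≤ Y ^ t := Real.rpow_le_rpow hy.le hyY htpos.le
        nlinarith [Real.rpow_pos_of_pos hy t, Real.rpow_pos_of_pos hx (1 - t),
          Real.rpow_pos_of_pos hYp t]
      have hyeq : y = Y := by
        by_contra hne
        have hlt : y < Y := lt_of_le_of_ne hyY hne
        have h1 : y ^ t < Y ^ t := Real.rpow_lt_rpow hy.le hlt htpos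
        have h2 : x ^ (1 - t) ≤ X ^ (1 - t) := Real.rpow_le_rpow hx.le hxX h1t.le
        nlinarith [Real.rpow_pos_of_pos hx (1 - t), Real.rpow_pos_of_pos hy t,
          Real.rpow_pos_of_pos hXp (1 - t)]
      exact ⟨hAuniq M hM hxeq, hBuniq N hN hyeq⟩
    · rintro ⟨rfl, rfl⟩
      rfl
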